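/- Suppose there exists A > 0 with d(θ,θ') ≤ √n · A · ‖θ − θ'‖₂ for all θ, θ' ∈ Θ. Then for every ε > 0, the covering number satisfies N(Θ, d, ε) ≤ ( e + e·l·ε² / (2·n·M²·A²) )^{4·n·M²·A²/ε² + 1}. -/

import Mathlib

open MeasureTheory Real

/-- The covering number `N(A, d, ε)`: the minimal number of closed `d`-balls of radius
`ε` (centered in `A`) needed to cover `A`. -/
noncomputable def coveringNumber {X : Type*} (d : X → X → ℝ) (A : Set X) (ε : ℝ) : ℕ :=
  sInf {m : ℕ | ∃ S : Finset X, ↑S ⊆ A ∧ S.card = m ∧ ∀ a ∈ A, ∃ s ∈ S, d a s ≤ ε}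



/-- vertex of the scaled ℓ¹ ball -/
noncomputable def cnbVert {l : ℕ} (M : ℝ) (p : Fin l × Bool) : Fin l → ℝ :=
  fun i => if i = p.1 then (if p.2 then M else -M) else 0

lemma cnbVert_abs_sum {l : ℕ} (M : ℝ) (hM : 0 ≤ M) (p : Fin l × Bool) :
    ∑ j, |cnbVert M p j| = M := by
  have : ∀ j, |cnbVert M p j| = if j = p.1 then M else 0 := by
    intro j
    rcases p with ⟨i, b⟩
    cases b <;> simp [cnbVert, apply_ite abs, abs_of_nonneg hM] <;> split <;> simp [abs_of_nonneg hM]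
  simp [this]

lemma cnbVert_sq_sum {l : ℕ} (M : ℝ) (p : Fin l × Bool) :
    ∑ j, (cnbVert M p j)^2 = M^2 := by
  have : ∀ j, (cnbVert M p j)^2 = if j = p.1 then M^2 else 0 := by
    intro j
    rcases p with ⟨i, b⟩
    cases b <;> simp [cnbVert] <;> split <;> ring
  simp [this]

lemma cnbVert_dot {l : ℕ} (M : ℝ) (w : Fin l → ℝ) (p : Fin l × Bool) :
    ∑ j, w j * cnbVert M p j = w p.1 * (if p.2 then M else -M) := by
  have : ∀ j, w j * cnbVert M p j = if j = p.1 then w j * (if p.2 then M else -M) else 0 := by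
    intro j; simp only [cnbVert]; split <;> simp
  simp [this]

/-- ℓ2 ≤ ℓ1 -/
lemma sq_sum_le_sum_abs_sq {l : ℕ} (θ : Fin l → ℝ) :
    ∑ j, (θ j)^2 ≤ (∑ j, |θ j|)^2 := by
  have h : ∀ j ∈ Finset.univ, (θ j)^2 ≤ |θ j| * ∑ i, |θ i| := by
    intro j _
    have h1 : |θ j| ≤ ∑ i, |θ i| :=
      Finset.single_le_sum (fun i _ => abs_nonneg (θ i)) (Finset.mem_univ j)
    calc (θ j)^2 = |θ j| * |θ j| := by rw [← sq_abs, sq]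
    _ ≤ |θ j| * ∑ i, |θ i| := by
        exact mul_le_mul_of_nonneg_left h1 (abs_nonneg _)
  calc ∑ j, (θ j)^2 ≤ ∑ j, |θ j| * ∑ i, |θ i| := Finset.sum_le_sum h
  _ = (∑ j, |θ j|)^2 := by rw [← Finset.sum_mul]; ring



lemma cnbExpand {l : ℕ} (u v : Fin l → ℝ) (a b : ℝ) :
    ∑ j, (a * u j + b * v j)^2
      = a^2 * ∑ j, (u j)^2 + 2*a*b * ∑ j, u j * v j + b^2 * ∑ j, (v j)^2 := by
  have h : ∀ j, (a * u j + b * v j)^2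
      = a^2*(u j)^2 + (2*a*b)*(u j * v j) + b^2*(v j)^2 := fun j => by ring
  simp only [h, Finset.sum_add_distrib, ← Finset.mul_sum]

lemma cnbDot_abs_le {l : ℕ} {M : ℝ} (hM : 0 ≤ M) {θ : Fin l → ℝ}
    (hθ : ∑ j, |θ j| ≤ M) (p : Fin l × Bool) :
    |∑ j, θ j * cnbVert M p j| ≤ M^2 := by
  rw [cnbVert_dot]
  have h1 : |θ p.1| ≤ M :=
    le_trans (Finset.single_le_sum (fun i _ => abs_nonneg (θ i)) (Finset.mem_univ p.1)) hθ
  have : |θ p.1 * (if p.2 then M else -M)| = |θ p.1| * M := by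
    rw [abs_mul]; congr 1; split <;> simp [abs_of_nonneg hM]
  rw [this, sq]
  exact mul_le_mul h1 le_rfl hM (le_trans (abs_nonneg _) h1)

lemma cnbDistVert {l : ℕ} {M : ℝ} (hM : 0 ≤ M) {θ : Fin l → ℝ}
    (hθ : ∑ j, |θ j| ≤ M) (p : Fin l × Bool) :
    ∑ j, (θ j - cnbVert M p j)^2 ≤ 4 * M^2 := by
  have h := cnbExpand θ (cnbVert M p) 1 (-1)
  simp only [one_mul, neg_one_mul, ← sub_eq_add_neg] at h
  rw [h, cnbVert_sq_sum]
  have h1 : ∑ j, (θ j)^2 ≤ M^2 := le_trans (sq_sum_le_sum_abs_sq θ)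
    (by nlinarith [Finset.sum_nonneg (fun j (_ : j ∈ Finset.univ) => abs_nonneg (θ j))])
  have h2 := neg_abs_le (∑ j, θ j * cnbVert M p j)
  have h3 := cnbDot_abs_le hM hθ p
  nlinarith

lemma cnbMaurey {l : ℕ} (hl : 0 < l) {M : ℝ} (hM : 0 < M)
    (θ : Fin l → ℝ) (hθ : ∑ j, |θ j| ≤ M) :
    ∀ k : ℕ, ∃ g : Fin (k+1) → Fin l × Bool,
      ∑ j, (θ j - ((k+1:ℕ):ℝ)⁻¹ * ∑ i, cnbVert M (g i) j)^2 ≤ 4*M^2/(k+1) := by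
  intro k
  induction k with
  | zero =>
    refine ⟨fun _ => (⟨0, hl⟩, true), ?_⟩
    simpa using cnbDistVert hM.le hθ (⟨0, hl⟩, true)
  | succ k ih =>
    obtain ⟨g, hg⟩ := ih
    set c : Fin l → ℝ := fun j => ((k+1:ℕ):ℝ)⁻¹ * ∑ i, cnbVert M (g i) j with hc
    set w : Fin l → ℝ := fun j => c j - θ j with hw
    obtain ⟨j0, -, hj0⟩ := Finset.exists_max_image Finset.univ (fun j => |w j|)
      ⟨⟨0, hl⟩, Finset.mem_univ _⟩
    set p : Fin l × Bool := (j0, decide (w j0 < 0)) with hp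
    have hdotv : ∑ j, w j * cnbVert M p j = -(M * |w j0|) := by
      rw [cnbVert_dot]
      by_cases h : w j0 < 0
      · simp [hp, h, abs_of_neg h]; ring
      · simp [hp, h, abs_of_nonneg (not_lt.mp h)]; ring
    have hkey : ∑ j, w j * cnbVert M p j ≤ ∑ j, w j * θ j := by
      rw [hdotv]
      have h1 : -(∑ j, |w j * θ j|) ≤ ∑ j, w j * θ j := by
        have := Finset.abs_sum_le_sum_abs (fun j => w j * θ j) Finset.univ
        linarith [neg_abs_le (∑ j, w j * θ j)]
      have h2 : ∑ j, |w j * θ j| ≤ |w j0| * M := by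
        calc ∑ j, |w j * θ j| = ∑ j, |w j| * |θ j| := by simp [abs_mul]
        _ ≤ ∑ j, |w j0| * |θ j| := Finset.sum_le_sum (fun j _ =>
            mul_le_mul_of_nonneg_right (hj0 j (Finset.mem_univ j)) (abs_nonneg _))
        _ = |w j0| * ∑ j, |θ j| := by rw [Finset.mul_sum]
        _ ≤ |w j0| * M := mul_le_mul_of_nonneg_left hθ (abs_nonneg _)
      linarith
    set g' : Fin (k+1+1) → Fin l × Bool := Fin.snoc g p with hg'
    refine ⟨g', ?_⟩
    have hsum : ∀ j, ∑ i : Fin (k+2), cnbVert M (g' i) j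
        = (∑ i : Fin (k+1), cnbVert M (g i) j) + cnbVert M p j := by
      intro j
      rw [Fin.sum_univ_castSucc]
      simp [hg']
    have hkpos : (0:ℝ) < (k+1:ℝ) := by positivity
    have hk2pos : (0:ℝ) < (k+2:ℝ) := by positivity
    set a : ℝ := -((k+1:ℝ)/(k+2:ℝ)) with ha
    set b : ℝ := 1/((k+2):ℝ) with hb
    clear_value a b
    have hpt : ∀ j, θ j - ((k+1+1:ℕ):ℝ)⁻¹ * ∑ i, cnbVert M (g' i) j
        = a * w j + b * (θ j - cnbVert M p j) := by
      intro j
      rw [hsum j]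
      have hcj : ∑ i : Fin (k+1), cnbVert M (g i) j = (k+1:ℝ) * c j := by
        rw [hc]; push_cast; field_simp
      rw [hcj, hw, ha, hb]
      push_cast
      field_simp
      ring
    calc ∑ j, (θ j - ((k+1+1:ℕ):ℝ)⁻¹ * ∑ i, cnbVert M (g' i) j)^2
        = ∑ j, (a * w j + b * (θ j - cnbVert M p j))^2 := by
          exact Finset.sum_congr rfl (fun j _ => by rw [hpt j])
      _ = a^2 * ∑ j, (w j)^2 + 2*a*b * ∑ j, w j * (θ j - cnbVert M p j)
            + b^2 * ∑ j, (θ j - cnbVert M p j)^2 := cnbExpand _ _ a b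
      _ ≤ 4*M^2/((k+1:ℕ)+1) := by
          push_cast
          have hw2 : ∑ j, (w j)^2 ≤ 4*M^2/(k+1) := by
            have : ∀ j, (w j)^2 = (θ j - c j)^2 := fun j => by rw [hw]; ring
            rw [Finset.sum_congr rfl (fun j _ => this j)]
            exact_mod_cast hg
          have hdot : 0 ≤ ∑ j, w j * (θ j - cnbVert M p j) := by
            have : ∑ j, w j * (θ j - cnbVert M p j)
                = ∑ j, w j * θ j - ∑ j, w j * cnbVert M p j := by
              rw [← Finset.sum_sub_distrib]
              exact Finset.sum_congr rfl (fun j _ => by ring)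
            linarith [hkey]
          have hdv : ∑ j, (θ j - cnbVert M p j)^2 ≤ 4*M^2 := cnbDistVert hM.le hθ p
          have hab : 2*a*b ≤ 0 := by
            rw [ha, hb]
            have e : 2 * -((k+1:ℝ)/(k+2:ℝ)) * (1/(k+2:ℝ))
                = -(2*((k+1:ℝ)/(k+2:ℝ))*(1/(k+2:ℝ))) := by ring
            rw [e]
            have : 0 ≤ 2*((k+1:ℝ)/(k+2:ℝ))*(1/(k+2:ℝ)) := by positivity
            linarith
          have h1 : 2*a*b * ∑ j, w j * (θ j - cnbVert M p j) ≤ 0 :=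
            mul_nonpos_of_nonpos_of_nonneg hab hdot
          have ha2 : a^2 = ((k+1:ℝ)/(k+2:ℝ))^2 := by rw [ha]; ring
          have hb2 : b^2 = (1/(k+2:ℝ))^2 := by rw [hb]
          have hwnn : 0 ≤ ∑ j, (w j)^2 :=
            Finset.sum_nonneg (fun j _ => sq_nonneg _)
          have key : a^2 * ∑ j, (w j)^2 + b^2 * ∑ j, (θ j - cnbVert M p j)^2
              ≤ 4*M^2/(k+1+1) := by
            rw [ha2, hb2]
            have e1 : ((k+1:ℝ)/(k+2:ℝ))^2 * (4*M^2/(k+1)) + (1/(k+2:ℝ))^2 * (4*M^2)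
                = 4*M^2/(k+2) := by field_simp; ring
            have s1 : ((k+1:ℝ)/(k+2:ℝ))^2 * ∑ j, (w j)^2
                ≤ ((k+1:ℝ)/(k+2:ℝ))^2 * (4*M^2/(k+1)) :=
              mul_le_mul_of_nonneg_left hw2 (sq_nonneg _)
            have s2 : (1/(k+2:ℝ))^2 * ∑ j, (θ j - cnbVert M p j)^2
                ≤ (1/(k+2:ℝ))^2 * (4*M^2) :=
              mul_le_mul_of_nonneg_left hdv (sq_nonneg _)
            have : (k+1+1:ℝ) = (k+2:ℝ) := by ring
            rw [this]
            linarith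
          linarith


lemma cnb_pow_pow_le (k : ℕ) : ((k:ℝ))^k ≤ Real.exp 1 ^ k * (Nat.factorial k : ℝ) := by
  induction k with
  | zero => simp
  | succ k ih =>
    have hstep : ((k+1:ℕ):ℝ)^k ≤ Real.exp 1 * (k:ℝ)^k := by
      rcases Nat.eq_zero_or_pos k with h|h
      · subst h
        have := Real.add_one_le_exp 1
        simpa using by linarith
      · have hkpos : (0:ℝ) < k := by exact_mod_cast h
        have h1 : ((k+1:ℕ):ℝ) = (k:ℝ) * (1 + 1/k) := by push_cast; field_simp
        rw [h1, mul_pow]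
        have h3 : (1 + 1/(k:ℝ)) ≤ Real.exp (1/k) := by
          have := Real.add_one_le_exp (1/(k:ℝ)); linarith
        have h2 : (1 + 1/(k:ℝ))^k ≤ Real.exp 1 := by
          calc (1 + 1/(k:ℝ))^k ≤ Real.exp (1/k) ^ k :=
              pow_le_pow_left₀ (by positivity) h3 k
          _ = Real.exp ((k:ℕ) * (1/k)) := (Real.exp_nat_mul _ k).symm
          _ = Real.exp 1 := by rw [mul_one_div, div_self (ne_of_gt hkpos)]
        rw [mul_comm (Real.exp 1)]
        exact mul_le_mul_of_nonneg_left h2 (pow_nonneg hkpos.le k)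
    calc ((k+1:ℕ):ℝ)^(k+1) = ((k+1:ℕ):ℝ) * ((k+1:ℕ):ℝ)^k := by ring
    _ ≤ ((k+1:ℕ):ℝ) * (Real.exp 1 * (k:ℝ)^k) :=
        mul_le_mul_of_nonneg_left hstep (by positivity)
    _ ≤ ((k+1:ℕ):ℝ) * (Real.exp 1 * (Real.exp 1^k * (Nat.factorial k : ℝ))) := by
        have h4 : Real.exp 1 * (k:ℝ)^k ≤ Real.exp 1 * (Real.exp 1^k * (Nat.factorial k : ℝ)) :=
          mul_le_mul_of_nonneg_left ih (le_of_lt (Real.exp_pos 1))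
        exact mul_le_mul_of_nonneg_left h4 (by positivity)
    _ = Real.exp 1^(k+1) * (Nat.factorial (k+1) : ℝ) := by
        rw [Nat.factorial_succ]; push_cast; ring

lemma cnb_choose_le {m k : ℕ} (hk : 0 < k) :
    ((m.choose k : ℕ) : ℝ) ≤ (Real.exp 1 * m / k)^k := by
  have h1 : ((m.choose k : ℕ):ℝ) ≤ ((m:ℝ))^k / (Nat.factorial k : ℝ) := by
    have := Nat.choose_le_pow_div (α := ℝ) k m
    push_cast at this ⊢
    convert this using 2
  have h2 := cnb_pow_pow_le k
  have hkpos : (0:ℝ) < k := by exact_mod_cast hk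
  have hfac : (0:ℝ) < (Nat.factorial k : ℝ) := by exact_mod_cast k.factorial_pos
  have h3 : ((m:ℝ))^k / (Nat.factorial k : ℝ) ≤ (Real.exp 1 * m / k)^k := by
    have he : (Real.exp 1 * m / k)^k = Real.exp 1^k * (m:ℝ)^k / (k:ℝ)^k := by
      rw [div_pow, mul_pow]
    rw [he, div_le_div_iff₀ hfac (by positivity)]
    calc (m:ℝ)^k * (k:ℝ)^k ≤ (m:ℝ)^k * (Real.exp 1^k * (Nat.factorial k : ℝ)) :=
        mul_le_mul_of_nonneg_left h2 (by positivity)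
    _ = Real.exp 1^k * (m:ℝ)^k * (Nat.factorial k : ℝ) := by ring
  linarith

lemma cnb_sym_exists_fn {α : Type*} {k : ℕ} (s : Sym α k) :
    ∃ g : Fin k → α, (s : Multiset α) = ↑(List.ofFn g) := by
  obtain ⟨m, hm⟩ := s
  subst hm
  have hlen : m.toList.length = Multiset.card m := Multiset.length_toList m
  refine ⟨fun i => m.toList.get (Fin.cast hlen.symm i), ?_⟩
  have : List.ofFn (fun i : Fin (Multiset.card m) => m.toList.get (Fin.cast hlen.symm i))
      = m.toList := by
    apply List.ext_get
    · simp [hlen]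
    · intro i h1 h2
      simp [List.get_ofFn]
  rw [this, Multiset.coe_toList]
  rfl




lemma cnb_multiset_sum {l k : ℕ} (M : ℝ) (g : Fin k → Fin l × Bool) (j : Fin l) :
    (((List.ofFn g : List (Fin l × Bool)) : Multiset (Fin l × Bool)).map
      (fun p => cnbVert M p j)).sum = ∑ i, cnbVert M (g i) j := by
  rw [Multiset.map_coe, Multiset.sum_coe, List.map_ofFn, List.sum_ofFn]
  rfl

lemma cnb_net_mem {l k : ℕ} (hk : 0 < k) {M : ℝ} (hM : 0 ≤ M)
    (g : Fin k → Fin l × Bool) :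
    ∑ j, |(k:ℝ)⁻¹ * ∑ i, cnbVert M (g i) j| ≤ M := by
  have hkpos : (0:ℝ) < k := by exact_mod_cast hk
  calc ∑ j, |(k:ℝ)⁻¹ * ∑ i, cnbVert M (g i) j|
      = (k:ℝ)⁻¹ * ∑ j, |∑ i, cnbVert M (g i) j| := by
        rw [Finset.mul_sum]
        exact Finset.sum_congr rfl (fun j _ => by
          rw [abs_mul, abs_of_nonneg (by positivity : (0:ℝ) ≤ (k:ℝ)⁻¹)])
    _ ≤ (k:ℝ)⁻¹ * ∑ j, ∑ i, |cnbVert M (g i) j| := by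
        gcongr with j hj
        exact Finset.abs_sum_le_sum_abs _ _
    _ = (k:ℝ)⁻¹ * ∑ i : Fin k, ∑ j, |cnbVert M (g i) j| := by rw [Finset.sum_comm]
    _ = (k:ℝ)⁻¹ * ∑ i : Fin k, M := by
        rw [Finset.sum_congr rfl (fun i _ => cnbVert_abs_sum M hM (g i))]
    _ = M := by
        rw [Finset.sum_const, Finset.card_univ, Fintype.card_fin, nsmul_eq_mul]
        field_simp


/-- The covering-number estimate of Section 2.2: if `d(θ,θ') ≤ √n A ‖θ−θ'‖₂` on
`Θ = {θ : ‖θ‖₁ ≤ M}` with `A > 0`, then for every `ε > 0`,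
`N(Θ, d, ε) ≤ (e + e l ε² / (2 n M² A²)) ^ (4 n M² A² / ε² + 1)`. -/
theorem covering_number_bound
    (n l : ℕ) (hn : 0 < n) (hl : 0 < l) (M : ℝ) (hM : 0 < M)
    (𝔛 : Type*) (x : Fin n → 𝔛) (φ : (Fin l → ℝ) → 𝔛 → ℝ)
    (A : ℝ) (hA : 0 < A)
    (hcontr : ∀ θ θ' : Fin l → ℝ, (∑ j, |θ j|) ≤ M → (∑ j, |θ' j|) ≤ M →
      Real.sqrt (∑ i, (φ θ (x i) - φ θ' (x i))^2)
        ≤ Real.sqrt n * A * Real.sqrt (∑ j, (θ j - θ' j)^2))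
    (ε : ℝ) (hε : 0 < ε) :
    (coveringNumber (fun θ θ' : Fin l → ℝ => Real.sqrt (∑ i, (φ θ (x i) - φ θ' (x i))^2))
        {θ : Fin l → ℝ | (∑ j, |θ j|) ≤ M} ε : ℝ)
      ≤ (Real.exp 1 + Real.exp 1 * l * ε^2 / (2 * n * M^2 * A^2))
          ^ ((4 * n * M^2 * A^2 / ε^2 + 1) : ℝ) := by
  classical
  have hn' : (0:ℝ) < n := by exact_mod_cast hn
  have hl' : (0:ℝ) < l := by exact_mod_cast hl
  set B : ℝ := 4 * n * M^2 * A^2 / ε^2 with hBdef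
  have hBpos : 0 < B := by positivity
  obtain ⟨k, hkpos, hkB, hkB1⟩ : ∃ k : ℕ, 0 < k ∧ B ≤ k ∧ (k:ℝ) ≤ B + 1 :=
    ⟨⌈B⌉₊, Nat.ceil_pos.mpr hBpos, Nat.le_ceil B, (Nat.ceil_lt_add_one hBpos.le).le⟩
  have hk' : (0:ℝ) < k := by exact_mod_cast hkpos
  -- the net
  set f : Sym (Fin l × Bool) k → (Fin l → ℝ) :=
    fun s => fun j => (k:ℝ)⁻¹ * ((s : Multiset (Fin l × Bool)).map
      (fun p => cnbVert M p j)).sum with hfdef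
  set S : Finset (Fin l → ℝ) := Finset.image f Finset.univ with hSdef
  have hfval : ∀ g : Fin k → Fin l × Bool, ∀ j,
      f ⟨((List.ofFn g : List (Fin l × Bool)) : Multiset (Fin l × Bool)), by simp⟩ j
        = (k:ℝ)⁻¹ * ∑ i, cnbVert M (g i) j := by
    intro g j
    show (k:ℝ)⁻¹ * (((List.ofFn g : List (Fin l × Bool)) : Multiset (Fin l × Bool)).map
      (fun p => cnbVert M p j)).sum = _
    rw [cnb_multiset_sum]
  have hmemΘ : ∀ s : Sym (Fin l × Bool) k, (∑ j, |f s j|) ≤ M := by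
    intro s
    obtain ⟨g, hg⟩ := cnb_sym_exists_fn s
    have hv : ∀ j, f s j = (k:ℝ)⁻¹ * ∑ i, cnbVert M (g i) j := by
      intro j
      show (k:ℝ)⁻¹ * ((s : Multiset (Fin l × Bool)).map (fun p => cnbVert M p j)).sum = _
      rw [hg, cnb_multiset_sum]
    rw [Finset.sum_congr rfl (fun j _ => by rw [hv j])]
    exact cnb_net_mem hkpos hM.le g
  have hsub : ↑S ⊆ {θ : Fin l → ℝ | (∑ j, |θ j|) ≤ M} := by
    intro θ hθ
    rw [hSdef] at hθ
    simp only [Finset.coe_image, Set.mem_image, Finset.coe_univ] at hθ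
    obtain ⟨s, -, rfl⟩ := hθ
    exact hmemΘ s
  have hcov : ∀ θ ∈ {θ : Fin l → ℝ | (∑ j, |θ j|) ≤ M}, ∃ s ∈ S,
      Real.sqrt (∑ i, (φ θ (x i) - φ s (x i))^2) ≤ ε := by
    intro θ hθ
    obtain ⟨k', rfl⟩ : ∃ k', k = k' + 1 := ⟨k - 1, (Nat.succ_pred_eq_of_pos hkpos).symm⟩
    obtain ⟨g, hg⟩ := cnbMaurey hl hM θ hθ k'
    set s0 : Fin l → ℝ :=
      f ⟨((List.ofFn g : List (Fin l × Bool)) : Multiset (Fin l × Bool)), by simp⟩ with hs0def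
    refine ⟨s0, by rw [hSdef, hs0def]; exact Finset.mem_image_of_mem f (Finset.mem_univ _), ?_⟩
    have hs0 : ∀ j, s0 j = ((k'+1:ℕ):ℝ)⁻¹ * ∑ i, cnbVert M (g i) j := hfval g
    have hs0Θ : (∑ j, |s0 j|) ≤ M := hmemΘ _
    have hq : ∑ j, (θ j - s0 j)^2 ≤ ε^2/((n:ℝ)*A^2) := by
      have h1 : ∑ j, (θ j - s0 j)^2 ≤ 4*M^2/((k'+1:ℕ):ℝ) := by
        rw [Finset.sum_congr rfl (fun j _ => by rw [hs0 j])]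
        exact_mod_cast hg
      have h2 : 4*M^2/((k'+1:ℕ):ℝ) ≤ 4*M^2/B :=
        div_le_div_of_nonneg_left (by positivity) hBpos hkB
      have h3 : 4*M^2/B = ε^2/((n:ℝ)*A^2) := by
        rw [hBdef]; field_simp
      linarith
    have h4 : Real.sqrt (∑ j, (θ j - s0 j)^2) ≤ ε / (Real.sqrt n * A) := by
      have h5 : ε^2/((n:ℝ)*A^2) = (ε / (Real.sqrt n * A))^2 := by
        rw [div_pow, mul_pow, Real.sq_sqrt hn'.le]
      calc Real.sqrt (∑ j, (θ j - s0 j)^2)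
          ≤ Real.sqrt (ε^2/((n:ℝ)*A^2)) := Real.sqrt_le_sqrt hq
        _ = ε / (Real.sqrt n * A) := by rw [h5, Real.sqrt_sq (by positivity)]
    have hsn : 0 < Real.sqrt n := Real.sqrt_pos.mpr hn'
    calc Real.sqrt (∑ i, (φ θ (x i) - φ s0 (x i))^2)
        ≤ Real.sqrt n * A * Real.sqrt (∑ j, (θ j - s0 j)^2) := hcontr θ s0 hθ hs0Θ
      _ ≤ Real.sqrt n * A * (ε / (Real.sqrt n * A)) :=
          mul_le_mul_of_nonneg_left h4 (by positivity)
      _ = ε := by field_simp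
  have hNle : coveringNumber
      (fun θ θ' : Fin l → ℝ => Real.sqrt (∑ i, (φ θ (x i) - φ θ' (x i))^2))
      {θ : Fin l → ℝ | (∑ j, |θ j|) ≤ M} ε ≤ S.card :=
    Nat.sInf_le ⟨S, hsub, rfl, hcov⟩
  have hcard : S.card ≤ (2*l + k).choose k := by
    have h1 : S.card ≤ Fintype.card (Sym (Fin l × Bool) k) :=
      le_trans Finset.card_image_le (le_of_eq Finset.card_univ)
    have h2 : Fintype.card (Sym (Fin l × Bool) k) = (2*l + k - 1).choose k := by
      rw [Sym.card_sym_eq_multichoose, Fintype.card_prod, Fintype.card_fin, Fintype.card_bool,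
        Nat.mul_comm, Nat.multichoose_eq]
    have h3 : (2*l + k - 1).choose k ≤ (2*l + k).choose k :=
      Nat.choose_le_choose k (Nat.sub_le _ _)
    exact le_trans h1 (le_trans (le_of_eq h2) h3)
  set C : ℝ := Real.exp 1 + Real.exp 1 * l * ε^2 / (2 * n * M^2 * A^2) with hCdef
  have hC1 : 1 ≤ C := by
    have he := Real.add_one_le_exp 1
    have h0 : 0 ≤ Real.exp 1 * l * ε^2 / (2 * n * M^2 * A^2) := by positivity
    rw [hCdef]; linarith
  have hchain : ((2*l + k).choose k : ℝ) ≤ C ^ (k:ℕ) := by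
    calc ((2*l + k).choose k : ℝ)
        ≤ (Real.exp 1 * ((2*l+k:ℕ):ℝ) / k)^k := cnb_choose_le hkpos
      _ = (Real.exp 1 + 2*Real.exp 1*l/k)^k := by
          congr 1
          push_cast
          field_simp
          ring
      _ ≤ C^k := by
          apply pow_le_pow_left₀ (by positivity)
          rw [hCdef]
          have h6 : 2*Real.exp 1*(l:ℝ)/k ≤ 2*Real.exp 1*l/B :=
            div_le_div_of_nonneg_left (by positivity) hBpos hkB
          have h7 : 2*Real.exp 1*(l:ℝ)/B = Real.exp 1 * l * ε^2 / (2 * n * M^2 * A^2) := by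
            rw [hBdef]; field_simp; ring
          linarith
  have hrpow : C ^ (k:ℕ) ≤ C ^ ((B + 1 : ℝ)) := by
    rw [← Real.rpow_natCast C k]
    exact Real.rpow_le_rpow_of_exponent_le hC1 hkB1
  calc (coveringNumber
      (fun θ θ' : Fin l → ℝ => Real.sqrt (∑ i, (φ θ (x i) - φ θ' (x i))^2))
      {θ : Fin l → ℝ | (∑ j, |θ j|) ≤ M} ε : ℝ)
      ≤ (S.card : ℝ) := by exact_mod_cast hNle
    _ ≤ ((2*l + k).choose k : ℝ) := by exact_mod_cast hcard
    _ ≤ C ^ (k:ℕ) := hchain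
    _ ≤ C ^ ((B + 1 : ℝ)) := hrpow
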